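/- Let S, Y ⊆ ℝ^d with S bounded, and ψ : S → ℝ a differentiable convex function such that ∇ψ : Int(S) → Int(Y) is a homeomorphism. Let φ : ℝ^d → ℝ be a convex function with ∂φ(ℝ^d) ⊆ S such that: whenever y = ∇ψ(x) for some x ∈ S, then x ∈ ∂φ(y). Then ψ*, the convex conjugate of ψ, is differentiable everywhere on Int(Y); φ is differentiable everywhere on Int(Y); and ∇φ(y) = ∇ψ*(y) for all y ∈ Int(Y). -/

import Mathlib

open scoped RealInnerProductSpace
open Filter Topology

noncomputable section

abbrev E (d : ℕ) : Type := EuclideanSpace ℝ (Fin d)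

/-- Subdifferential of a real-valued function at a point. -/
def subdiffR {d : ℕ} (f : E d → ℝ) (x : E d) : Set (E d) :=
  {ξ | ∀ y : E d, f x + ⟪ξ, y - x⟫ ≤ f y}

/-- Subdifferential of an `EReal`-valued function at a point. -/
def subdiffE {d : ℕ} (f : E d → EReal) (x : E d) : Set (E d) :=
  {ξ | ∀ y : E d, f x + ((⟪ξ, y - x⟫ : ℝ) : EReal) ≤ f y}

/-- Convexity of an `EReal`-valued function. -/
def ConvexE {d : ℕ} (f : E d → EReal) : Prop :=
  ∀ x y : E d, ∀ a b : ℝ, 0 ≤ a → 0 ≤ b → a + b = 1 →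
    f (a • x + b • y) ≤ (a : EReal) * f x + (b : EReal) * f y

/-- Legendre–Fenchel dual of `ψ : S → ℝ` (extended by `+∞` outside `S`), i.e.
`ψ*(y) = sup_{x ∈ S} (⟪x, y⟫ − ψ x)`, with values in `EReal`. -/
def econjOn {d : ℕ} (f : E d → ℝ) (S : Set (E d)) (y : E d) : EReal :=
  ⨆ x : S, (((⟪(x : E d), y⟫ : ℝ) - f x : ℝ) : EReal)

/-- The gradient inequality for a convex function. -/
lemma grad_ineq {d : ℕ} {S : Set (E d)} {ψ : E d → ℝ} (hc : ConvexOn ℝ S ψ)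
    {x : E d} (hx : x ∈ S) {g : E d} (hg : HasGradientAt ψ g x)
    {z : E d} (hz : z ∈ S) : ψ x + ⟪g, z - x⟫ ≤ ψ z := by
  set L : ℝ → E d := fun t => x + t • (z - x) with hLdef
  have hL0 : L 0 = x := by simp [hLdef]
  have hLd : HasDerivAt L (z - x) 0 := by
    simpa [hLdef] using ((hasDerivAt_id (0:ℝ)).smul_const (z - x)).const_add x
  have hD : HasDerivAt (fun t => ψ (L t)) ⟪g, z - x⟫ 0 := by
    have h1 := hg.hasFDerivAt
    rw [← hL0] at h1
    exact h1.comp_hasDerivAt 0 hLd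
  have key : Tendsto (slope (fun t => ψ (L t)) 0) (𝓝[>] 0) (𝓝 ⟪g, z - x⟫) :=
    (hasDerivAt_iff_tendsto_slope.mp hD).mono_left
      (nhdsWithin_mono _ (fun t ht => ne_of_gt ht))
  have hev : ∀ᶠ t in 𝓝[>] (0:ℝ), slope (fun t => ψ (L t)) 0 t ≤ ψ z - ψ x := by
    filter_upwards [Ioo_mem_nhdsGT_of_mem (Set.mem_Ico.mpr ⟨le_refl (0:ℝ), one_pos⟩)]
      with t ht
    have ht0 : (0:ℝ) < t := ht.1
    have h1 : ψ (L t) ≤ (1 - t) * ψ x + t * ψ z := by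
      have := hc.2 hx hz (by linarith [ht.2] : (0:ℝ) ≤ 1 - t) ht0.le (by ring)
      have heq : (1 - t) • x + t • z = L t := by
        simp [hLdef, sub_smul, smul_sub, one_smul]; abel
      simpa [heq, smul_eq_mul] using this
    rw [slope_def_field, hL0, sub_zero, div_le_iff₀ ht0]
    nlinarith
  have hle : ⟪g, z - x⟫ ≤ ψ z - ψ x := le_of_tendsto key hev
  linarith

/-- Value of the conjugate at a gradient point. -/
lemma econj_eq {d : ℕ} {S : Set (E d)} {ψ : E d → ℝ} (hc : ConvexOn ℝ S ψ)
    {x' y' : E d} (hx' : x' ∈ S) (hg : HasGradientAt ψ y' x') :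
    econjOn ψ S y' = ((⟪x', y'⟫ - ψ x' : ℝ) : EReal) := by
  apply le_antisymm
  · apply iSup_le
    rintro ⟨w, hw⟩
    rw [EReal.coe_le_coe_iff]
    have h1 := grad_ineq hc hx' hg hw
    have h2 : ⟪y', w - x'⟫ = ⟪w, y'⟫ - ⟪x', y'⟫ := by
      rw [inner_sub_right, real_inner_comm y' w, real_inner_comm y' x']
    simp only [h2] at h1
    linarith
  · exact le_iSup (fun p : S => (((⟪(p : E d), y'⟫ : ℝ) - ψ p : ℝ) : EReal)) ⟨x', hx'⟩

/-- If `v` satisfies the monotonicity-type inequality against a map continuous at `y`,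
then `v` equals the value of that map at `y`. -/
lemma limit_lemma {d : ℕ} {Y : Set (E d)} {y v x : E d} (hy : y ∈ interior Y)
    (F : E d → E d) (hF : ContinuousAt F y) (hFy : F y = x)
    (hineq : ∀ y' ∈ interior Y, ⟪v - F y', y' - y⟫ ≤ 0) : v = x := by
  have hmain : ∀ u : E d, ⟪v - x, u⟫ ≤ 0 := by
    intro u
    have tt : Tendsto (fun t : ℝ => y + t • u) (𝓝[>] 0) (𝓝 y) := by
      have : Tendsto (fun t : ℝ => y + t • u) (𝓝 0) (𝓝 y) := by
        have : Continuous (fun t : ℝ => y + t • u) := by continuity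
        simpa using this.tendsto 0
      exact this.mono_left nhdsWithin_le_nhds
    have hmem : ∀ᶠ t in 𝓝[>] (0:ℝ), y + t • u ∈ interior Y :=
      tt.eventually (isOpen_interior.eventually_mem hy)
    have hFt : Tendsto (fun t : ℝ => F (y + t • u)) (𝓝[>] 0) (𝓝 x) := by
      rw [← hFy]; exact hF.tendsto.comp tt
    have hin : Tendsto (fun t : ℝ => ⟪v - F (y + t • u), u⟫) (𝓝[>] 0) (𝓝 ⟪v - x, u⟫) :=
      (tendsto_const_nhds.sub hFt).inner tendsto_const_nhds
    refine le_of_tendsto hin ?_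
    filter_upwards [hmem, self_mem_nhdsWithin] with t hmt ht0
    have ht0 : (0:ℝ) < t := ht0
    have := hineq (y + t • u) hmt
    rw [add_sub_cancel_left, inner_smul_right] at this
    nlinarith
  have := hmain (v - x)
  have h2 : ‖v - x‖ ^ 2 ≤ 0 := by
    rw [← real_inner_self_eq_norm_sq]; exact this
  have : v - x = 0 := by
    have := norm_nonneg (v - x)
    have hn : ‖v - x‖ = 0 := by nlinarith
    simpa using hn
  exact sub_eq_zero.mp this

/-- `S` bounded, `ψ : S → ℝ` differentiable convex with `∇ψ : Int S → Int Y`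
a homeomorphism, and `φ : ℝ^d → ℝ` convex with all subgradients in `S` such that
`y = ∇ψ(x)` for `x ∈ S` implies `x ∈ ∂φ(y)`. Then `ψ*` and `φ` are differentiable
everywhere on `Int Y` with `∇φ = ∇ψ*` there (expressed via singleton subdifferentials). -/
theorem statement16 {d : ℕ} (S Y : Set (E d)) (hSbd : Bornology.IsBounded S)
    (ψ : E d → ℝ) (hψconv : ConvexOn ℝ S ψ)
    (gψ : E d → E d) (hψdiff : ∀ x ∈ S, HasGradientAt ψ (gψ x) x)
    (hhom : ∃ h : (interior S) ≃ₜ (interior Y), ∀ p : interior S, (h p : E d) = gψ p)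
    (φ : E d → ℝ) (hφconv : ConvexOn ℝ Set.univ φ)
    (hφsub : ∀ y, subdiffR φ y ⊆ S)
    (hkey : ∀ x ∈ S, ∀ y : E d, gψ x = y → x ∈ subdiffR φ y) :
    ∀ y ∈ interior Y, ∃ v : E d,
      subdiffE (econjOn ψ S) y = {v} ∧ subdiffR φ y = {v} := by
  classical
  obtain ⟨h, hh⟩ := hhom
  intro y hy
  set x : E d := (h.symm ⟨y, hy⟩ : E d) with hxdef
  have hxint : x ∈ interior S := (h.symm ⟨y, hy⟩).2
  have hxS : x ∈ S := interior_subset hxint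
  have hgx : gψ x = y := by
    have := hh (h.symm ⟨y, hy⟩)
    rw [h.apply_symm_apply] at this
    exact this.symm
  set F : E d → E d := fun z =>
    if hz : z ∈ interior Y then (h.symm ⟨z, hz⟩ : E d) else x with hFdef
  have hFint : ∀ y' ∈ interior Y, F y' ∈ interior S := by
    intro y' hy'
    simp only [hFdef, dif_pos hy']
    exact (h.symm ⟨y', hy'⟩).2
  have hFS : ∀ y' ∈ interior Y, F y' ∈ S := fun y' hy' => interior_subset (hFint y' hy')
  have hFg : ∀ y' ∈ interior Y, gψ (F y') = y' := by
    intro y' hy'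
    simp only [hFdef, dif_pos hy']
    have := hh (h.symm ⟨y', hy'⟩)
    rw [h.apply_symm_apply] at this
    exact this.symm
  have hFy : F y = x := by simp only [hFdef, dif_pos hy, hxdef]
  have hFcont : ContinuousAt F y := by
    have hco : ContinuousOn F (interior Y) := by
      rw [continuousOn_iff_continuous_restrict]
      have hre : (interior Y).domRestrict F = fun q : interior Y => (h.symm q : E d) := by
        funext q
        simp [hFdef, Set.domRestrict, dif_pos q.2]
      rw [hre]
      exact continuous_subtype_val.comp h.symm.continuous
    exact hco.continuousAt (isOpen_interior.mem_nhds hy)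
  -- subdifferential of φ
  have hxφ : x ∈ subdiffR φ y := hkey x hxS y hgx
  have hφuniq : ∀ v ∈ subdiffR φ y, v = x := by
    intro v hv
    refine limit_lemma hy F hFcont hFy ?_
    intro y' hy'
    have hF' : F y' ∈ subdiffR φ y' := hkey (F y') (hFS y' hy') y' (hFg y' hy')
    have h1 := hv y'
    have h2 := hF' y
    have h3 : ⟪F y', y - y'⟫ = -⟪F y', y' - y⟫ := by
      rw [← inner_neg_right, neg_sub]
    rw [h3] at h2
    rw [inner_sub_left]
    linarith
  -- value of the conjugate on the interior of Y
  have hval : ∀ y' ∈ interior Y,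
      econjOn ψ S y' = ((⟪F y', y'⟫ - ψ (F y') : ℝ) : EReal) := by
    intro y' hy'
    refine econj_eq hψconv (hFS y' hy') ?_
    have := hψdiff (F y') (hFS y' hy')
    rwa [hFg y' hy'] at this
  have hvaly : econjOn ψ S y = ((⟪x, y⟫ - ψ x : ℝ) : EReal) := by
    have := hval y hy
    rwa [hFy] at this
  -- x is in the subdifferential of the conjugate
  have hxE : x ∈ subdiffE (econjOn ψ S) y := by
    intro z
    rw [hvaly, ← EReal.coe_add]
    have heq : ⟪x, y⟫ - ψ x + ⟪x, z - y⟫ = ⟪x, z⟫ - ψ x := by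
      rw [inner_sub_right]; ring
    rw [heq]
    exact le_iSup (fun p : S => (((⟪(p : E d), z⟫ : ℝ) - ψ p : ℝ) : EReal)) ⟨x, hxS⟩
  have hEuniq : ∀ v ∈ subdiffE (econjOn ψ S) y, v = x := by
    intro v hv
    refine limit_lemma hy F hFcont hFy ?_
    intro y' hy'
    have h1 := hv y'
    rw [hvaly, hval y' hy', ← EReal.coe_add, EReal.coe_le_coe_iff] at h1
    have h2 : ψ x + ⟪y, F y' - x⟫ ≤ ψ (F y') :=
      grad_ineq hψconv hxS (hgx ▸ hψdiff x hxS) (hFS y' hy')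
    have e1 : ⟪y, F y' - x⟫ = ⟪F y', y⟫ - ⟪x, y⟫ := by
      rw [inner_sub_right, real_inner_comm y (F y'), real_inner_comm y x]
    have e2 : ⟪F y', y' - y⟫ = ⟪F y', y'⟫ - ⟪F y', y⟫ := inner_sub_right _ _ _
    rw [e1] at h2
    rw [inner_sub_left, e2]
    linarith
  refine ⟨x, ?_, ?_⟩
  · ext v
    simp only [Set.mem_singleton_iff]
    exact ⟨hEuniq v, fun hv => hv ▸ hxE⟩
  · ext v
    simp only [Set.mem_singleton_iff]
    exact ⟨hφuniq v, fun hv => hv ▸ hxφ⟩
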